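/- arXiv:2312.07218 — 2 statements merged into one kernel-verified Lean document; each statement's English description precedes it below -/
import Mathlib

section
/- Along the particle flow dv_i/dt = -∑_j w_j A(v_i-v_j) b(v_i,v_j) with b(v_i,v_j) = ∇(δH^N_ε/δf)(v_i) - ∇(δH^N_ε/δf)(v_j), the discrete entropy H^N_ε = ∑_i w_i log(∑_j w_j ψ_ε(v_i - v_j)) satisfies dH^N_ε/dt = -(1/2)∑_{i,j} w_i w_j b(v_i,v_j)·A(v_i-v_j) b(v_i,v_j) ≤ 0. -/
open Matrix
open RealInnerProductSpace

/-- Gaussian mollifier `ψ_ε(v) = (2πε)^{-d/2} exp(-|v|²/(2ε))`. -/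
noncomputable def psiMoll (d : ℕ) (ε : ℝ) (v : EuclideanSpace ℝ (Fin d)) : ℝ :=
  (2 * Real.pi * ε) ^ (-(d : ℝ) / 2) * Real.exp (-‖v‖ ^ 2 / (2 * ε))

/-- Gradient of the Gaussian mollifier: `∇ψ_ε(v) = -(v/ε) ψ_ε(v)`. -/
noncomputable def gradPsiMoll (d : ℕ) (ε : ℝ) (v : EuclideanSpace ℝ (Fin d)) :
    EuclideanSpace ℝ (Fin d) :=
  (-(1 / ε) * psiMoll d ε v) • v

/-- Blob solution `f̃^N(x) = ∑_k w_k ψ_ε(x - u_k)`. -/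
noncomputable def blob (d N : ℕ) (ε : ℝ) (w : Fin N → ℝ)
    (u : Fin N → EuclideanSpace ℝ (Fin d)) (x : EuclideanSpace ℝ (Fin d)) : ℝ :=
  ∑ k, w k * psiMoll d ε (x - u k)

/-- Anti-symmetric regularised entropy variation
`∇(δH^N_ε/δf)(u_i) = ∇f̃^N(u_i)/f̃^N(u_i) + ∑_k w_k ∇ψ_ε(u_i - u_k)/f̃^N(u_k)`. -/
noncomputable def gradEntVar (d N : ℕ) (ε : ℝ) (w : Fin N → ℝ)
    (u : Fin N → EuclideanSpace ℝ (Fin d)) (i : Fin N) : EuclideanSpace ℝ (Fin d) :=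
  (blob d N ε w u (u i))⁻¹ • (∑ k, w k • gradPsiMoll d ε (u i - u k)) +
    ∑ k, (w k / blob d N ε w u (u k)) • gradPsiMoll d ε (u i - u k)

/-- `b(v_i, v_j) = ∇(δH^N_ε/δf)(v_i) - ∇(δH^N_ε/δf)(v_j)`. -/
noncomputable def bEnt (d N : ℕ) (ε : ℝ) (w : Fin N → ℝ)
    (u : Fin N → EuclideanSpace ℝ (Fin d)) (i j : Fin N) : EuclideanSpace ℝ (Fin d) :=
  gradEntVar d N ε w u i - gradEntVar d N ε w u j

lemma psiMoll_pos (d : ℕ) {ε : ℝ} (hε : 0 < ε) (x : EuclideanSpace ℝ (Fin d)) :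
    0 < psiMoll d ε x := by
  unfold psiMoll
  positivity

lemma gradPsiMoll_neg (d : ℕ) (ε : ℝ) (x : EuclideanSpace ℝ (Fin d)) :
    gradPsiMoll d ε (-x) = - gradPsiMoll d ε x := by
  simp [gradPsiMoll, psiMoll, norm_neg, smul_neg]

lemma hasDerivAt_psiMoll_comp {d : ℕ} {ε : ℝ} (hε : 0 < ε)
    {c : ℝ → EuclideanSpace ℝ (Fin d)} {δ : EuclideanSpace ℝ (Fin d)} {t : ℝ}
    (hc : HasDerivAt c δ t) :
    HasDerivAt (fun s => psiMoll d ε (c s)) ⟪gradPsiMoll d ε (c t), δ⟫ t := by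
  have h1 : HasDerivAt (fun s => ‖c s‖ ^ 2) (2 * ⟪c t, δ⟫) t := hc.norm_sq
  have h4 := ((h1.neg.div_const (2 * ε)).exp).const_mul ((2 * Real.pi * ε) ^ (-(d : ℝ) / 2))
  have heq : ⟪gradPsiMoll d ε (c t), δ⟫ =
      (2 * Real.pi * ε) ^ (-(d : ℝ) / 2) *
        (Real.exp (-‖c t‖ ^ 2 / (2 * ε)) * (-(2 * ⟪c t, δ⟫) / (2 * ε))) := by
    unfold gradPsiMoll psiMoll
    rw [real_inner_smul_left]
    field_simp
  rw [heq]
  exact h4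

lemma dot_eq_inner {d : ℕ} (x y : EuclideanSpace ℝ (Fin d)) :
    dotProduct x y = ⟪x, y⟫ := by
  simp [PiLp.inner_apply, dotProduct, RCLike.inner_apply, conj_trivial, mul_comm]

lemma entropy_algebra {N : ℕ} {V : Type*} [NormedAddCommGroup V] [InnerProductSpace ℝ V]
    (w B : Fin N → ℝ) (hB : ∀ i, B i ≠ 0)
    (g : Fin N → Fin N → V) (hg : ∀ i j, g j i = - g i j)
    (m : Fin N → Fin N → V) (hm : ∀ i j, m j i = - m i j)
    (G : Fin N → V)
    (hG : ∀ i, G i = (B i)⁻¹ • (∑ k, w k • g i k) + ∑ k, (w k / B k) • g i k)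
    (δ : Fin N → V) (hδ : ∀ i, δ i = -(∑ j, w j • m i j))
    (b : Fin N → Fin N → V) (hb : ∀ i j, b i j = G i - G j) :
    ∑ i, w i * ((∑ j, w j * ⟪g i j, δ i - δ j⟫) / B i)
      = -(1 / 2) * ∑ i, ∑ j, (w i * w j) * ⟪b i j, m i j⟫ := by
  have e1 : ∑ i, w i * ((∑ j, w j * ⟪g i j, δ i - δ j⟫) / B i)
      = (∑ i, ∑ j, (w i * w j / B i) * ⟪g i j, δ i⟫)
        - ∑ i, ∑ j, (w i * w j / B i) * ⟪g i j, δ j⟫ := by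
    rw [← Finset.sum_sub_distrib]
    refine Finset.sum_congr rfl fun i _ => ?_
    rw [← Finset.sum_sub_distrib, Finset.sum_div, Finset.mul_sum]
    refine Finset.sum_congr rfl fun j _ => ?_
    rw [inner_sub_right]
    field_simp
  have e2 : ∑ i, ∑ j, (w i * w j / B i) * ⟪g i j, δ j⟫
      = ∑ i, ∑ j, -((w i * w j / B j) * ⟪g i j, δ i⟫) := by
    rw [Finset.sum_comm]
    refine Finset.sum_congr rfl fun a _ => Finset.sum_congr rfl fun c _ => ?_
    rw [hg a c, inner_neg_left]
    ring
  have e3 : ∑ i, w i * ⟪G i, δ i⟫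
      = ∑ i, ((∑ j, (w i * w j / B i) * ⟪g i j, δ i⟫)
          + ∑ j, (w i * w j / B j) * ⟪g i j, δ i⟫) := by
    refine Finset.sum_congr rfl fun i _ => ?_
    rw [hG i]
    simp only [inner_add_left, sum_inner, real_inner_smul_left, mul_add, Finset.mul_sum]
    congr 1
    · exact Finset.sum_congr rfl fun j _ => by rw [div_eq_mul_inv]; ring
    · exact Finset.sum_congr rfl fun j _ => by rw [div_eq_mul_inv]; ring
  have step1 : ∑ i, w i * ((∑ j, w j * ⟪g i j, δ i - δ j⟫) / B i)
      = ∑ i, w i * ⟪G i, δ i⟫ := by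
    rw [e1, e2, e3, ← Finset.sum_sub_distrib]
    refine Finset.sum_congr rfl fun i _ => ?_
    rw [Finset.sum_neg_distrib, sub_neg_eq_add]
  have step2 : ∑ i, w i * ⟪G i, δ i⟫
      = -∑ i, ∑ j, (w i * w j) * ⟪G i, m i j⟫ := by
    rw [← Finset.sum_neg_distrib]
    refine Finset.sum_congr rfl fun i _ => ?_
    rw [hδ i]
    simp only [inner_neg_right, inner_sum, real_inner_smul_right, mul_neg, Finset.mul_sum]
    exact neg_inj.mpr (Finset.sum_congr rfl fun j _ => (mul_assoc _ _ _).symm)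
  have swap : ∑ i, ∑ j, (w i * w j) * ⟪G i, m i j⟫
      = ∑ i, ∑ j, -((w i * w j) * ⟪G j, m i j⟫) := by
    rw [Finset.sum_comm]
    refine Finset.sum_congr rfl fun a _ => Finset.sum_congr rfl fun c _ => ?_
    rw [hm a c, inner_neg_right]
    ring
  have hsum2 : (∑ i, ∑ j, (w i * w j) * ⟪G i, m i j⟫)
        + (∑ i, ∑ j, (w i * w j) * ⟪G i, m i j⟫)
      = ∑ i, ∑ j, (w i * w j) * ⟪b i j, m i j⟫ := by
    nth_rewrite 2 [swap]
    rw [← Finset.sum_add_distrib]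
    refine Finset.sum_congr rfl fun i _ => ?_
    rw [← Finset.sum_add_distrib]
    refine Finset.sum_congr rfl fun j _ => ?_
    rw [hb i j, inner_sub_left]
    ring
  rw [step1, step2]
  linarith [hsum2]

/-- Dissipation of the discrete entropy along the particle flow. -/
theorem discrete_entropy_dissipation (d N : ℕ) (ε : ℝ) (hε : 0 < ε)
    (w : Fin N → ℝ) (hw : ∀ i, 0 < w i)
    (A : EuclideanSpace ℝ (Fin d) → Matrix (Fin d) (Fin d) ℝ)
    (hAsymm : ∀ q, (A q).IsSymm)
    (hAeven : ∀ q, A q = A (-q))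
    (hApsd : ∀ q x, 0 ≤ dotProduct x ((A q).mulVec x))
    (v : Fin N → ℝ → EuclideanSpace ℝ (Fin d)) (t : ℝ)
    (hode : ∀ i, ∀ s : ℝ,
      HasDerivAt (v i)
        (-(∑ j, w j • (WithLp.toLp 2 ((A (v i s - v j s)).mulVec
            (bEnt d N ε w (fun k => v k s) i j)) : EuclideanSpace ℝ (Fin d)))) s) :
    HasDerivAt (fun s => ∑ i, w i * Real.log (∑ j, w j * psiMoll d ε (v i s - v j s)))
        (-(1 / 2) * ∑ i, ∑ j, w i * w j *
          dotProduct (bEnt d N ε w (fun k => v k t) i j)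
            ((A (v i t - v j t)).mulVec (bEnt d N ε w (fun k => v k t) i j))) t ∧
      -(1 / 2) * (∑ i, ∑ j, w i * w j *
          dotProduct (bEnt d N ε w (fun k => v k t) i j)
            ((A (v i t - v j t)).mulVec (bEnt d N ε w (fun k => v k t) i j))) ≤ 0 := by
  have hnn : 0 ≤ ∑ i, ∑ j, w i * w j *
      dotProduct (bEnt d N ε w (fun k => v k t) i j)
        ((A (v i t - v j t)).mulVec (bEnt d N ε w (fun k => v k t) i j)) :=
    Finset.sum_nonneg fun i _ => Finset.sum_nonneg fun j _ =>
      mul_nonneg (mul_nonneg (hw i).le (hw j).le) (hApsd _ _)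
  refine ⟨?_, by linarith⟩
  rcases Nat.eq_zero_or_pos N with hN | hN
  · subst hN
    simpa using hasDerivAt_const t (0 : ℝ)
  haveI : Nonempty (Fin N) := ⟨⟨0, hN⟩⟩
  have hB : ∀ i, (0 : ℝ) < ∑ j, w j * psiMoll d ε (v i t - v j t) := fun i =>
    Finset.sum_pos (fun j _ => mul_pos (hw j) (psiMoll_pos d hε _)) Finset.univ_nonempty
  set δ' : Fin N → EuclideanSpace ℝ (Fin d) := fun i =>
    -(∑ j, w j • (WithLp.toLp 2 ((A (v i t - v j t)).mulVec
        (bEnt d N ε w (fun k => v k t) i j)) : EuclideanSpace ℝ (Fin d))) with hδ'def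
  have hode' : ∀ i, HasDerivAt (v i) (δ' i) t := fun i => hode i t
  have hder : HasDerivAt
      (fun s => ∑ i, w i * Real.log (∑ j, w j * psiMoll d ε (v i s - v j s)))
      (∑ i, w i * ((∑ j, w j * ⟪gradPsiMoll d ε (v i t - v j t), δ' i - δ' j⟫) /
        (∑ j, w j * psiMoll d ε (v i t - v j t)))) t :=
    HasDerivAt.fun_sum fun i _ =>
      (((HasDerivAt.fun_sum fun j _ =>
          (hasDerivAt_psiMoll_comp hε ((hode' i).sub (hode' j))).const_mul (w j)).log
        (hB i).ne').const_mul (w i))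
  have key := entropy_algebra w (fun i => ∑ j, w j * psiMoll d ε (v i t - v j t))
    (fun i => (hB i).ne')
    (fun i j => gradPsiMoll d ε (v i t - v j t))
    (fun i j => by
      show gradPsiMoll d ε (v j t - v i t) = -gradPsiMoll d ε (v i t - v j t)
      rw [← neg_sub (v i t) (v j t), gradPsiMoll_neg])
    (fun i j => (WithLp.toLp 2 ((A (v i t - v j t)).mulVec
        (bEnt d N ε w (fun k => v k t) i j)) : EuclideanSpace ℝ (Fin d)))
    (fun i j => by
      show (WithLp.toLp 2 ((A (v j t - v i t)).mulVec (bEnt d N ε w (fun k => v k t) j i))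
          : EuclideanSpace ℝ (Fin d)) = _
      have h1 : A (v j t - v i t) = A (v i t - v j t) := by
        rw [← neg_sub (v i t) (v j t), ← hAeven]
      have h2 : bEnt d N ε w (fun k => v k t) j i
          = -(bEnt d N ε w (fun k => v k t) i j) := by
        simp [bEnt, neg_sub]
      rw [h1, h2, WithLp.ofLp_neg, Matrix.mulVec_neg, WithLp.toLp_neg])
    (fun i => gradEntVar d N ε w (fun k => v k t) i)
    (fun i => rfl)
    δ' (fun i => rfl)
    (fun i j => bEnt d N ε w (fun k => v k t) i j)
    (fun i j => rfl)
  have hval : (∑ i, w i * ((∑ j, w j * ⟪gradPsiMoll d ε (v i t - v j t), δ' i - δ' j⟫) /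
        (∑ j, w j * psiMoll d ε (v i t - v j t))))
      = -(1 / 2) * ∑ i, ∑ j, w i * w j *
          dotProduct (bEnt d N ε w (fun k => v k t) i j)
            ((A (v i t - v j t)).mulVec (bEnt d N ε w (fun k => v k t) i j)) := by
    rw [key]
    congr 1
    simp only [← dot_eq_inner, WithLp.ofLp_toLp]

  exact hval ▸ hder
end

section
/- (Trubnikov integral, Coulomb case) With f(V) = (ρ/(πT))exp(-|V|²/T) and f(q) = (ρ/(4πT))exp(-|q|²/(4T)) on ℝ², the integral I_C = ∬ (v_y q_y q_x²/|q|³) f(V) f(q) dV dq, where v_y = V_y + q_y/2, equals ρ²√(πT)/16. -/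
open MeasureTheory Real Set intervalIntegral

/-- Centred Gaussian `f(V) = (ρ/(πT)) exp(-|V|²/T)`. -/
noncomputable def fV (ρ T : ℝ) (V : EuclideanSpace ℝ (Fin 2)) : ℝ :=
  ρ / (Real.pi * T) * Real.exp (-‖V‖ ^ 2 / T)

/-- Centred Gaussian `f(q) = (ρ/(4πT)) exp(-|q|²/(4T))`. -/
noncomputable def fq (ρ T : ℝ) (q : EuclideanSpace ℝ (Fin 2)) : ℝ :=
  ρ / (4 * Real.pi * T) * Real.exp (-‖q‖ ^ 2 / (4 * T))



lemma integral_fV (ρ T : ℝ) (hT : 0 < T) :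
    ∫ V : EuclideanSpace ℝ (Fin 2), fV ρ T V = ρ := by
  have h : ∀ V : EuclideanSpace ℝ (Fin 2),
      fV ρ T V = ρ / (π * T) * Real.exp (-(1/T) * ‖V‖ ^ 2) := by
    intro V; rw [fV]; congr 1; ring_nf
  simp_rw [h]
  rw [MeasureTheory.integral_const_mul, GaussianFourier.integral_rexp_neg_mul_sq_norm
    (by positivity : (0:ℝ) < 1/T)]
  rw [finrank_euclideanSpace_fin]
  norm_num
  field_simp

lemma abs_apply_le_norm (x : EuclideanSpace ℝ (Fin 2)) (i : Fin 2) : |x i| ≤ ‖x‖ := by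
  rw [EuclideanSpace.norm_eq, ← Real.sqrt_sq_eq_abs]
  apply Real.sqrt_le_sqrt
  rw [← sq_abs]
  exact Finset.single_le_sum (f := fun j => |x j| ^ 2) (fun j _ => by positivity)
    (Finset.mem_univ i)

lemma integrable_exp_norm (b : ℝ) (hb : 0 < b) :
    Integrable (fun v : EuclideanSpace ℝ (Fin 2) => Real.exp (-b * ‖v‖ ^ 2)) := by
  have h := GaussianFourier.integrable_cexp_neg_mul_sq_norm_add
    (V := EuclideanSpace ℝ (Fin 2)) (b := (b:ℂ)) (by simpa using hb) 0 0
  have := h.norm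
  refine this.congr (Filter.Eventually.of_forall fun v => ?_)
  simp [Complex.norm_exp, Real.abs_exp]
  exact Or.inl (by rw [← Complex.ofReal_pow, Complex.ofReal_re])

lemma integrable_norm_mul_exp (b : ℝ) (hb : 0 < b) :
    Integrable (fun v : EuclideanSpace ℝ (Fin 2) => ‖v‖ * Real.exp (-b * ‖v‖ ^ 2)) := by
  have key : ∀ x : ℝ, 0 ≤ x → x * Real.exp (-(b/2) * x ^ 2) ≤ 1 + 2/b := by
    intro x hx
    have h1 : (b/2) * x ^ 2 + 1 ≤ Real.exp ((b/2) * x ^ 2) := by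
      have := Real.add_one_le_exp ((b/2) * x ^ 2); linarith
    have hpos : 0 < (b/2) * x ^ 2 + 1 := by positivity
    have he : Real.exp (-(b/2) * x ^ 2) ≤ 1 / ((b/2) * x ^ 2 + 1) := by
      rw [neg_mul, Real.exp_neg, one_div]
      exact inv_anti₀ hpos h1
    calc x * Real.exp (-(b/2) * x ^ 2) ≤ x * (1 / ((b/2) * x ^ 2 + 1)) := by
          exact mul_le_mul_of_nonneg_left he hx
      _ ≤ 1 + 2/b := by
          rw [mul_one_div, div_le_iff₀ hpos]
          have hid : (1 + 2/b) * ((b/2) * x ^ 2 + 1) = b/2*x^2 + 1 + x^2 + 2/b := by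
            field_simp; ring
          rw [hid]
          nlinarith [sq_nonneg (x - 1), (div_pos two_pos hb).le,
            mul_nonneg (half_pos hb).le (sq_nonneg x)]
  refine Integrable.mono (((integrable_exp_norm (b/2) (by positivity)).const_mul (1 + 2/b)))
    ?_ (Filter.Eventually.of_forall fun v => ?_)
  · exact Continuous.aestronglyMeasurable (by fun_prop)
  · have hv : (0:ℝ) ≤ ‖v‖ := norm_nonneg v
    rw [Real.norm_eq_abs, Real.norm_eq_abs]
    have hexp : Real.exp (-b * ‖v‖ ^ 2) =
        Real.exp (-(b/2) * ‖v‖ ^ 2) * Real.exp (-(b/2) * ‖v‖ ^ 2) := by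
      rw [← Real.exp_add]; ring_nf
    have h2 : 0 < Real.exp (-(b/2) * ‖v‖ ^ 2) := Real.exp_pos _
    have habs : |‖v‖ * Real.exp (-b * ‖v‖ ^ 2)| = ‖v‖ * Real.exp (-b * ‖v‖ ^ 2) := by
      rw [abs_of_nonneg]; positivity
    rw [habs, hexp, ← mul_assoc]
    have hb2 : 0 ≤ 1 + 2/b := by positivity
    calc ‖v‖ * Real.exp (-(b/2) * ‖v‖ ^ 2) * Real.exp (-(b/2) * ‖v‖ ^ 2)
        ≤ (1 + 2/b) * Real.exp (-(b/2) * ‖v‖ ^ 2) :=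
          mul_le_mul_of_nonneg_right (key _ hv) h2.le
      _ ≤ |(1 + 2/b) * Real.exp (-(b/2) * ‖v‖ ^ 2)| := le_abs_self _


noncomputable def psiE : (ℝ × ℝ) ≃ᵐ EuclideanSpace ℝ (Fin 2) :=
  (MeasurableEquiv.finTwoArrow (α := ℝ)).symm.trans
    (MeasurableEquiv.toLp 2 (Fin 2 → ℝ))

lemma psiE_mp : MeasurePreserving psiE :=
  ((EuclideanSpace.volume_preserving_symm_measurableEquiv_toLp (Fin 2)).symm).comp
    ((volume_preserving_finTwoArrow ℝ).symm)

lemma psiE_apply0 (p : ℝ × ℝ) : psiE p 0 = p.1 := by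
  simp [psiE, MeasurableEquiv.coe_toLp]

lemma psiE_apply1 (p : ℝ × ℝ) : psiE p 1 = p.2 := by
  simp [psiE, MeasurableEquiv.coe_toLp]

lemma psiE_norm (p : ℝ × ℝ) : ‖psiE p‖ = Real.sqrt (p.1 ^ 2 + p.2 ^ 2) := by
  rw [EuclideanSpace.norm_eq, Fin.sum_univ_two, psiE_apply0, psiE_apply1]
  simp [sq_abs]

lemma transfer (f : EuclideanSpace ℝ (Fin 2) → ℝ) :
    ∫ q, f q = ∫ p : ℝ × ℝ, f (psiE p) :=
  (psiE_mp.integral_comp psiE.measurableEmbedding f).symm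

lemma radial2 (T : ℝ) (hT : 0 < T) :
    ∫ r in Ioi (0:ℝ), r ^ 2 * Real.exp (-r ^ 2 / (4 * T)) =
      2 * Real.sqrt π * T * Real.sqrt T := by
  have h1 : ∀ r ∈ Ioi (0:ℝ), r ^ 2 * Real.exp (-r ^ 2 / (4 * T)) =
      r ^ (2:ℝ) * Real.exp (-(1/(4*T)) * r ^ (2:ℝ)) := by
    intro r hr; rw [Real.rpow_two]; congr 1; ring
  rw [setIntegral_congr_fun measurableSet_Ioi h1,
    integral_rpow_mul_exp_neg_mul_rpow two_pos (by norm_num) (by positivity)]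
  have hg : Real.Gamma ((2 + 1) / 2) = Real.sqrt π / 2 := by
    rw [show ((2:ℝ)+1)/2 = 1/2 + 1 by norm_num, Real.Gamma_add_one (by norm_num),
      Real.Gamma_one_half_eq]; ring
  have hb : (1 / (4 * T) : ℝ) ^ (-((2:ℝ) + 1) / 2) = 8 * T * Real.sqrt T := by
    rw [show (-((2:ℝ)+1)/2 : ℝ) = -(3/2) by norm_num]
    rw [one_div, Real.inv_rpow (by positivity), Real.rpow_neg (by positivity), inv_inv]
    rw [show (3/2 : ℝ) = 1 + 1/2 by norm_num, Real.rpow_add (by positivity),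
      Real.rpow_one, ← Real.sqrt_eq_rpow, Real.sqrt_mul (by norm_num),
      show Real.sqrt 4 = 2 by rw [show (4:ℝ) = 2^2 by norm_num, Real.sqrt_sq (by norm_num)]]
    ring
  rw [hg, hb]; ring

lemma angular2 : ∫ θ in Ioo (-π) π, Real.sin θ ^ 2 * Real.cos θ ^ 2 = π / 4 := by
  rw [← MeasureTheory.integral_Ioc_eq_integral_Ioo,
    ← intervalIntegral.integral_of_le (by linarith [Real.pi_pos] : -π ≤ π)]
  rw [integral_sin_sq_mul_cos_sq]
  have h4 : Real.sin (4 * π) = 0 := by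
    rw [show (4:ℝ) * π = (4:ℕ) * π by norm_num, Real.sin_nat_mul_pi]
  have h4' : Real.sin (4 * -π) = 0 := by
    rw [show (4:ℝ) * -π = -(4 * π) by ring, Real.sin_neg, h4, neg_zero]
  rw [h4, h4']; ring

lemma angular1 : ∫ θ in Ioo (-π) π, Real.sin θ * Real.cos θ ^ 2 = 0 := by
  rw [← MeasureTheory.integral_Ioc_eq_integral_Ioo,
    ← intervalIntegral.integral_of_le (by linarith [Real.pi_pos] : -π ≤ π)]
  simpa using @integral_sin_pow_odd_mul_cos_pow (-π) π 0 2

lemma K_eq (ρ T : ℝ) (hρ : 0 < ρ) (hT : 0 < T) :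
    ∫ q : EuclideanSpace ℝ (Fin 2), (q 1) ^ 2 * (q 0) ^ 2 / ‖q‖ ^ 3 * fq ρ T q
      = ρ * Real.sqrt π * Real.sqrt T / 8 := by
  rw [transfer]
  have hG : ∀ p : ℝ × ℝ,
      (psiE p 1) ^ 2 * (psiE p 0) ^ 2 / ‖psiE p‖ ^ 3 * fq ρ T (psiE p)
        = p.2 ^ 2 * p.1 ^ 2 / (Real.sqrt (p.1 ^ 2 + p.2 ^ 2)) ^ 3 *
            (ρ / (4 * π * T) * Real.exp (-(p.1 ^ 2 + p.2 ^ 2) / (4 * T))) := by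
    intro p
    rw [fq, psiE_apply0, psiE_apply1, psiE_norm, Real.sq_sqrt (by positivity)]
  simp_rw [hG]
  rw [← integral_comp_polarCoord_symm, polarCoord_target]
  have hEq : EqOn (fun p : ℝ × ℝ => p.1 •
        ((polarCoord.symm p).2 ^ 2 * (polarCoord.symm p).1 ^ 2 /
          (Real.sqrt ((polarCoord.symm p).1 ^ 2 + (polarCoord.symm p).2 ^ 2)) ^ 3 *
          (ρ / (4 * π * T) *
            Real.exp (-((polarCoord.symm p).1 ^ 2 + (polarCoord.symm p).2 ^ 2) / (4 * T)))))
      (fun p : ℝ × ℝ =>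
        (ρ / (4 * π * T) * (p.1 ^ 2 * Real.exp (-p.1 ^ 2 / (4 * T)))) *
          (Real.sin p.2 ^ 2 * Real.cos p.2 ^ 2))
      (Ioi 0 ×ˢ Ioo (-π) π) := by
    intro p hp
    have hr : 0 < p.1 := hp.1
    simp only [polarCoord_symm_apply]
    have hsum : (p.1 * Real.cos p.2) ^ 2 + (p.1 * Real.sin p.2) ^ 2 = p.1 ^ 2 := by
      have := Real.sin_sq_add_cos_sq p.2; nlinarith [this]
    rw [hsum, Real.sqrt_sq hr.le]
    have := hT.ne'; have := Real.pi_ne_zero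
    field_simp
    ring_nf
    field_simp
  rw [setIntegral_congr_fun (measurableSet_Ioi.prod measurableSet_Ioo) hEq,
    Measure.volume_eq_prod,
    setIntegral_prod_mul (fun r : ℝ => ρ / (4 * π * T) * (r ^ 2 * rexp (-r ^ 2 / (4 * T))))
      (fun θ : ℝ => Real.sin θ ^ 2 * Real.cos θ ^ 2), MeasureTheory.integral_const_mul, radial2 T hT, angular2]
  have h1 : Real.pi ≠ 0 := Real.pi_ne_zero
  have h2 : T ≠ 0 := hT.ne'
  field_simp
  ring

lemma J_eq (ρ T : ℝ) (hT : 0 < T) :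
    ∫ q : EuclideanSpace ℝ (Fin 2), (q 1) * (q 0) ^ 2 / ‖q‖ ^ 3 * fq ρ T q = 0 := by
  rw [transfer]
  have hG : ∀ p : ℝ × ℝ,
      (psiE p 1) * (psiE p 0) ^ 2 / ‖psiE p‖ ^ 3 * fq ρ T (psiE p)
        = p.2 * p.1 ^ 2 / (Real.sqrt (p.1 ^ 2 + p.2 ^ 2)) ^ 3 *
            (ρ / (4 * π * T) * Real.exp (-(p.1 ^ 2 + p.2 ^ 2) / (4 * T))) := by
    intro p
    rw [fq, psiE_apply0, psiE_apply1, psiE_norm, Real.sq_sqrt (by positivity)]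
  simp_rw [hG]
  rw [← integral_comp_polarCoord_symm, polarCoord_target]
  have hEq : EqOn (fun p : ℝ × ℝ => p.1 •
        ((polarCoord.symm p).2 * (polarCoord.symm p).1 ^ 2 /
          (Real.sqrt ((polarCoord.symm p).1 ^ 2 + (polarCoord.symm p).2 ^ 2)) ^ 3 *
          (ρ / (4 * π * T) *
            Real.exp (-((polarCoord.symm p).1 ^ 2 + (polarCoord.symm p).2 ^ 2) / (4 * T)))))
      (fun p : ℝ × ℝ =>
        (ρ / (4 * π * T) * (p.1 * Real.exp (-p.1 ^ 2 / (4 * T)))) *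
          (Real.sin p.2 * Real.cos p.2 ^ 2))
      (Ioi 0 ×ˢ Ioo (-π) π) := by
    intro p hp
    have hr : 0 < p.1 := hp.1
    simp only [polarCoord_symm_apply]
    have hsum : (p.1 * Real.cos p.2) ^ 2 + (p.1 * Real.sin p.2) ^ 2 = p.1 ^ 2 := by
      have := Real.sin_sq_add_cos_sq p.2; nlinarith [this]
    rw [hsum, Real.sqrt_sq hr.le]
    have := hT.ne'; have := Real.pi_ne_zero
    field_simp
    ring_nf
    field_simp
  rw [setIntegral_congr_fun (measurableSet_Ioi.prod measurableSet_Ioo) hEq,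
    Measure.volume_eq_prod,
    setIntegral_prod_mul (fun r : ℝ => ρ / (4 * π * T) * (r * rexp (-r ^ 2 / (4 * T))))
      (fun θ : ℝ => Real.sin θ * Real.cos θ ^ 2), angular1, mul_zero]


lemma fq_eq (ρ T : ℝ) (q : EuclideanSpace ℝ (Fin 2)) :
    fq ρ T q = ρ / (4 * Real.pi * T) * Real.exp (-(1/(4*T)) * ‖q‖ ^ 2) := by
  rw [fq]; congr 1; ring_nf

lemma fq_nonneg (ρ T : ℝ) (hρ : 0 < ρ) (hT : 0 < T) (q : EuclideanSpace ℝ (Fin 2)) :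
    0 ≤ fq ρ T q := by
  rw [fq]; positivity

lemma meas_aux (ρ T : ℝ) (n : ℕ) :
    Measurable (fun q : EuclideanSpace ℝ (Fin 2) =>
      (q 1) ^ n * (q 0) ^ 2 / ‖q‖ ^ 3 * fq ρ T q) := by
  have m1 : Measurable fun q : EuclideanSpace ℝ (Fin 2) => q 1 :=
    (EuclideanSpace.proj (1 : Fin 2) : EuclideanSpace ℝ (Fin 2) →L[ℝ] ℝ).continuous.measurable
  have m0 : Measurable fun q : EuclideanSpace ℝ (Fin 2) => q 0 :=
    (EuclideanSpace.proj (0 : Fin 2) : EuclideanSpace ℝ (Fin 2) →L[ℝ] ℝ).continuous.measurable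
  have mfq : Measurable (fq ρ T) := by
    unfold fq; fun_prop
  exact (((m1.pow_const n).mul (m0.pow_const 2)).div
    (measurable_norm.pow_const 3)).mul mfq

lemma integrable_g1 (ρ T : ℝ) (hρ : 0 < ρ) (hT : 0 < T) :
    Integrable (fun q : EuclideanSpace ℝ (Fin 2) =>
      q 1 * (q 0) ^ 2 / ‖q‖ ^ 3 * fq ρ T q) := by
  refine Integrable.mono (((integrable_exp_norm (1/(4*T)) (by positivity)).const_mul
      (ρ / (4 * Real.pi * T)))) ?_ (Filter.Eventually.of_forall fun q => ?_)
  · have := meas_aux ρ T 1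
    simpa using this.aestronglyMeasurable
  · rw [Real.norm_eq_abs, Real.norm_eq_abs]
    have h1 : |q 1 * (q 0) ^ 2 / ‖q‖ ^ 3| ≤ 1 := by
      rcases eq_or_ne (‖q‖) 0 with h | h
      · rw [norm_eq_zero] at h; subst h; simp
      · have hn : 0 < ‖q‖ := lt_of_le_of_ne (norm_nonneg q) (Ne.symm h)
        rw [abs_div, abs_of_nonneg (by positivity : (0:ℝ) ≤ ‖q‖ ^ 3),
          div_le_one (by positivity)]
        have := abs_apply_le_norm q 1
        have h0 := abs_apply_le_norm q 0
        calc |q 1 * (q 0) ^ 2| = |q 1| * |q 0| ^ 2 := by rw [abs_mul, abs_pow]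
          _ ≤ ‖q‖ * ‖q‖ ^ 2 := by
              exact mul_le_mul this (by nlinarith [abs_nonneg (q 0)]) (by positivity)
                (norm_nonneg q)
          _ = ‖q‖ ^ 3 := by ring
    calc |q 1 * (q 0) ^ 2 / ‖q‖ ^ 3 * fq ρ T q|
        = |q 1 * (q 0) ^ 2 / ‖q‖ ^ 3| * fq ρ T q := by
          rw [abs_mul, abs_of_nonneg (fq_nonneg ρ T hρ hT q)]
      _ ≤ 1 * fq ρ T q := mul_le_mul_of_nonneg_right h1 (fq_nonneg ρ T hρ hT q)
      _ = ρ / (4 * Real.pi * T) * Real.exp (-(1/(4*T)) * ‖q‖ ^ 2) := by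
          rw [one_mul, fq_eq]
      _ ≤ |ρ / (4 * Real.pi * T) * Real.exp (-(1/(4*T)) * ‖q‖ ^ 2)| := le_abs_self _

lemma integrable_g2 (ρ T : ℝ) (hρ : 0 < ρ) (hT : 0 < T) :
    Integrable (fun q : EuclideanSpace ℝ (Fin 2) =>
      (q 1) ^ 2 * (q 0) ^ 2 / ‖q‖ ^ 3 * fq ρ T q) := by
  refine Integrable.mono (((integrable_norm_mul_exp (1/(4*T)) (by positivity)).const_mul
      (ρ / (4 * Real.pi * T)))) ?_ (Filter.Eventually.of_forall fun q => ?_)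
  · exact (meas_aux ρ T 2).aestronglyMeasurable
  · rw [Real.norm_eq_abs, Real.norm_eq_abs]
    have h1 : |(q 1) ^ 2 * (q 0) ^ 2 / ‖q‖ ^ 3| ≤ ‖q‖ := by
      rcases eq_or_ne (‖q‖) 0 with h | h
      · rw [norm_eq_zero] at h; subst h; simp
      · have hn : 0 < ‖q‖ := lt_of_le_of_ne (norm_nonneg q) (Ne.symm h)
        rw [abs_div, abs_of_nonneg (by positivity : (0:ℝ) ≤ ‖q‖ ^ 3),
          div_le_iff₀ (by positivity)]
        have h1' := abs_apply_le_norm q 1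
        have h0 := abs_apply_le_norm q 0
        calc |(q 1) ^ 2 * (q 0) ^ 2| = |q 1| ^ 2 * |q 0| ^ 2 := by
              rw [abs_mul, abs_pow, abs_pow]
          _ ≤ ‖q‖ ^ 2 * ‖q‖ ^ 2 := by
              apply mul_le_mul <;> nlinarith [abs_nonneg (q 0), abs_nonneg (q 1), hn,
                norm_nonneg q]
          _ = ‖q‖ * ‖q‖ ^ 3 := by ring
    calc |(q 1) ^ 2 * (q 0) ^ 2 / ‖q‖ ^ 3 * fq ρ T q|
        = |(q 1) ^ 2 * (q 0) ^ 2 / ‖q‖ ^ 3| * fq ρ T q := by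
          rw [abs_mul, abs_of_nonneg (fq_nonneg ρ T hρ hT q)]
      _ ≤ ‖q‖ * fq ρ T q := mul_le_mul_of_nonneg_right h1 (fq_nonneg ρ T hρ hT q)
      _ = ρ / (4 * Real.pi * T) * (‖q‖ * Real.exp (-(1/(4*T)) * ‖q‖ ^ 2)) := by
          rw [fq_eq]; ring
      _ ≤ |ρ / (4 * Real.pi * T) * (‖q‖ * Real.exp (-(1/(4*T)) * ‖q‖ ^ 2))| := le_abs_self _

/-- Trubnikov integral, Coulomb case. -/
theorem trubnikov_integral_coulomb (ρ T : ℝ) (hρ : 0 < ρ) (hT : 0 < T) :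
    (∫ V : EuclideanSpace ℝ (Fin 2), ∫ q : EuclideanSpace ℝ (Fin 2),
        (V 1 + q 1 / 2) * q 1 * (q 0) ^ 2 / ‖q‖ ^ 3 * fV ρ T V * fq ρ T q)
      = ρ ^ 2 * Real.sqrt (Real.pi * T) / 16 := by
  have hinner : ∀ V : EuclideanSpace ℝ (Fin 2),
      (∫ q : EuclideanSpace ℝ (Fin 2),
        (V 1 + q 1 / 2) * q 1 * (q 0) ^ 2 / ‖q‖ ^ 3 * fV ρ T V * fq ρ T q)
      = fV ρ T V *
          ((V 1) * (∫ q : EuclideanSpace ℝ (Fin 2), q 1 * (q 0) ^ 2 / ‖q‖ ^ 3 * fq ρ T q)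
            + (1/2) * (∫ q : EuclideanSpace ℝ (Fin 2),
                (q 1) ^ 2 * (q 0) ^ 2 / ‖q‖ ^ 3 * fq ρ T q)) := by
    intro V
    have hpt : ∀ q : EuclideanSpace ℝ (Fin 2),
        (V 1 + q 1 / 2) * q 1 * (q 0) ^ 2 / ‖q‖ ^ 3 * fV ρ T V * fq ρ T q
          = fV ρ T V * ((V 1) * (q 1 * (q 0) ^ 2 / ‖q‖ ^ 3 * fq ρ T q)
              + (1/2) * ((q 1) ^ 2 * (q 0) ^ 2 / ‖q‖ ^ 3 * fq ρ T q)) := fun q => by ring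
    simp_rw [hpt]
    rw [MeasureTheory.integral_const_mul]
    congr 1
    rw [integral_add ((integrable_g1 ρ T hρ hT).const_mul _)
      ((integrable_g2 ρ T hρ hT).const_mul _),
      MeasureTheory.integral_const_mul, MeasureTheory.integral_const_mul]
  simp_rw [hinner, J_eq ρ T hT, K_eq ρ T hρ hT, mul_zero, zero_add]
  rw [MeasureTheory.integral_mul_const, integral_fV ρ T hT,
    Real.sqrt_mul Real.pi_pos.le]
  ring
end
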